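/- Let ν ∈ (−1,0) be a real number and let ℓ be a natural number. Then ∫_{−1}^{1} (1−t)^{ν/2} · ((d/dt)^{ℓ} (1−t²)^{ℓ})(t) dt = (−1)^{ℓ} · (−ν/2)_{ℓ} · ∫_{−1}^{1} (1−t)^{ν/2}·(1+t)^{ℓ} dt, where (d/dt)^{ℓ} (1−t²)^{ℓ} denotes the ℓ-th derivative of the polynomial t ↦ (1−t²)^{ℓ}. -/

import Mathlib

open Polynomial
open Polynomial MeasureTheory Set Filter

noncomputable def Qp (l : ℕ) : ℕ → ℝ[X]
  | 0 => (1 + X)^l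
  | (i+1) => C (-((l - i : ℕ) : ℝ)) * Qp l i + (1 - X) * derivative (Qp l i)

noncomputable def Rp (l : ℕ) : ℕ → ℝ[X]
  | 0 => (1 - X)^l
  | (i+1) => C (((l - i : ℕ) : ℝ)) * Rp l i + (1 + X) * derivative (Rp l i)

lemma Qstruct (l : ℕ) : ∀ i ≤ l, (1 - X)^(l-i) * Qp l i = derivative^[i] ((1-X)^l * (1+X)^l) := by
  intro i
  induction i with
  | zero => intro _; simp [Qp]
  | succ i ih =>
    intro hi
    obtain ⟨k, hk⟩ : ∃ k, l - i = k + 1 := ⟨l - (i+1), by omega⟩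
    have hk2 : l - (i+1) = k := by omega
    rw [Function.iterate_succ_apply', ← ih (by omega), hk, hk2, Qp]
    simp only [derivative_mul, derivative_pow, derivative_sub, derivative_one, derivative_X]
    push_cast [hk]
    simp only [map_neg, map_add, map_sub, map_one, map_natCast]
    ring

lemma Rstruct (l : ℕ) : ∀ i ≤ l, (1 + X)^(l-i) * Rp l i = derivative^[i] ((1-X)^l * (1+X)^l) := by
  intro i
  induction i with
  | zero => intro _; simp [Rp, mul_comm]
  | succ i ih =>
    intro hi
    obtain ⟨k, hk⟩ : ∃ k, l - i = k + 1 := ⟨l - (i+1), by omega⟩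
    have hk2 : l - (i+1) = k := by omega
    rw [Function.iterate_succ_apply', ← ih (by omega), hk, hk2, Rp]
    simp only [derivative_mul, derivative_pow, derivative_add, derivative_one, derivative_X]
    push_cast [hk]
    simp only [map_neg, map_add, map_sub, map_one, map_natCast]
    ring

lemma Qeval (l : ℕ) (i : ℕ) (hi : i < l) : eval (-1 : ℝ) (Qp l i) = 0 := by
  have h1 := Qstruct l i hi.le
  have h2 := Rstruct l i hi.le
  have h3 : eval (-1:ℝ) ((1 - X)^(l-i) * Qp l i) = eval (-1:ℝ) ((1 + X)^(l-i) * Rp l i) := by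
    rw [h1, h2]
  simp only [eval_mul, eval_pow, eval_sub, eval_add, eval_one, eval_X] at h3
  have : ((1:ℝ) - (-1))^(l-i) ≠ 0 := by norm_num
  have h4 : ((1:ℝ) + (-1))^(l-i) = 0 := by
    rw [add_neg_cancel]; exact zero_pow (by omega)
  rw [h4, zero_mul] at h3
  exact (mul_eq_zero.mp h3).resolve_left this

lemma polyIter (p : ℝ[X]) : ∀ n, iteratedDeriv n (fun s : ℝ => p.eval s) = fun t => (derivative^[n] p).eval t := by
  intro n
  induction n with
  | zero => simp
  | succ n ih =>
    rw [iteratedDeriv_succ, ih, Function.iterate_succ_apply']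
    funext t
    exact Polynomial.deriv _

lemma intInt (ν : ℝ) (hν : (-1:ℝ) < ν) (p : ℝ[X]) :
    IntervalIntegrable (fun t : ℝ => (1 - t) ^ (ν/2) * p.eval t) volume (-1) 1 := by
  have h : IntervalIntegrable (fun t : ℝ => (1-t)^(ν/2)) volume (-1) 1 := by
    have := (intervalIntegral.intervalIntegrable_rpow' (a := 0) (b := 2) (by linarith : (-1:ℝ) < ν/2)).comp_sub_left 1
    norm_num at this
    exact this.symm
  exact h.mul_continuousOn (Polynomial.continuous p).continuousOn

lemma ibp (ν : ℝ) (hν : ν ∈ Set.Ioo (-1:ℝ) 0) (p : ℝ[X]) (hp : p.eval (-1:ℝ) = 0) :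
    ∫ t in (-1:ℝ)..1, (1 - t)^(ν/2) * eval t ((1 - X) * derivative p)
      = (ν/2 + 1) * ∫ t in (-1:ℝ)..1, (1 - t)^(ν/2) * eval t p := by
  set μ := ν/2 with hμ
  have hμ0 : -1/2 < μ := by rw [hμ]; cases hν; linarith
  have hμ1 : μ < 0 := by rw [hμ]; cases hν; linarith
  set F : ℝ → ℝ := fun t => (1-t)^(μ+1) * p.eval t with hF
  set f' : ℝ → ℝ := fun t => (1-t)^μ * eval t ((1-X) * derivative p)
    - (μ+1) * ((1-t)^μ * eval t p) with hf'
  have hderiv : ∀ x ∈ Ioo (-1:ℝ) 1, HasDerivAt F (f' x) x := by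
    intro x hx
    have hx1 : (0:ℝ) < 1 - x := by cases hx; linarith
    have h1 : HasDerivAt (fun t : ℝ => (1-t)^(μ+1)) (-( (μ+1) * (1-x)^μ)) x := by
      have := (Real.hasDerivAt_rpow_const (x := 1-x) (p := μ+1) (Or.inl hx1.ne')).comp x
        (((hasDerivAt_id x).const_sub 1))
      simpa [Function.comp_def] using this.neg.neg
    have h2 : HasDerivAt (fun t : ℝ => p.eval t) (eval x (derivative p)) x := p.hasDerivAt x
    have := h1.mul h2
    convert this using 1
    · rfl
    · rfl
    · rfl
    rw [hf']
    have hpow : (1-x)^(μ+1) = (1-x)^μ * (1-x) := Real.rpow_add_one hx1.ne' μ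
    simp only [eval_mul, eval_sub, eval_one, eval_X, hpow]
    ring
  have hint : IntervalIntegrable f' volume (-1) 1 := by
    rw [hf']
    exact (intInt ν hν.1 _).sub ((intInt ν hν.1 p).const_mul _)
  have hcont1 : Tendsto F (nhdsWithin 1 (Iio 1)) (nhds 0) := by
    have hc : ContinuousAt F 1 := by
      apply ContinuousAt.mul
      · exact (Real.continuousAt_rpow_const (1-1) (μ+1) (Or.inr (by linarith))).comp
          (by fun_prop)
      · exact (Polynomial.continuous p).continuousAt
    have : F 1 = 0 := by
      rw [hF]; simp [Real.zero_rpow (by linarith : μ + 1 ≠ 0)]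
    rw [← this]
    exact hc.continuousWithinAt.tendsto
  have hcont2 : Tendsto F (nhdsWithin (-1) (Ioi (-1))) (nhds 0) := by
    have hc : ContinuousAt F (-1) := by
      apply ContinuousAt.mul
      · exact (Real.continuousAt_rpow_const (1-(-1)) (μ+1) (Or.inl (by norm_num))).comp
          (by fun_prop)
      · exact (Polynomial.continuous p).continuousAt
    have : F (-1) = 0 := by rw [hF]; simp [hp]
    rw [← this]
    exact hc.continuousWithinAt.tendsto
  have key : ∫ t in (-1:ℝ)..1, f' t = 0 - 0 :=
    intervalIntegral.integral_eq_sub_of_hasDerivAt_of_tendsto (by norm_num) hderiv hint hcont2 hcont1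
  rw [sub_zero] at key
  rw [hf'] at key
  rw [intervalIntegral.integral_sub (intInt ν hν.1 ((1-X) * derivative p))
    ((intInt ν hν.1 p).const_mul (μ+1)), sub_eq_zero] at key
  rw [key, intervalIntegral.integral_const_mul]

lemma Sstep (ν : ℝ) (hν : ν ∈ Set.Ioo (-1:ℝ) 0) (l i : ℕ) (hi : i < l) :
    ∫ t in (-1:ℝ)..1, (1 - t)^(ν/2) * eval t (Qp l (i+1))
      = (ν/2 + 1 - ((l-i:ℕ):ℝ)) * ∫ t in (-1:ℝ)..1, (1 - t)^(ν/2) * eval t (Qp l i) := by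
  have hcong : (fun t : ℝ => (1 - t)^(ν/2) * eval t (Qp l (i+1)))
      = fun t => (-((l-i:ℕ):ℝ)) * ((1 - t)^(ν/2) * eval t (Qp l i))
        + (1 - t)^(ν/2) * eval t ((1 - X) * derivative (Qp l i)) := by
    funext t
    simp only [Qp, eval_add, eval_mul, eval_C]
    ring
  rw [hcong, intervalIntegral.integral_add ((intInt ν hν.1 _).const_mul _) (intInt ν hν.1 _),
    intervalIntegral.integral_const_mul, ibp ν hν _ (Qeval l i hi)]
  ring

lemma Scum (ν : ℝ) (hν : ν ∈ Set.Ioo (-1:ℝ) 0) (l : ℕ) : ∀ i ≤ l,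
    ∫ t in (-1:ℝ)..1, (1 - t)^(ν/2) * eval t (Qp l i)
      = (∏ j ∈ Finset.range i, (ν/2 + 1 - ((l-j:ℕ):ℝ)))
        * ∫ t in (-1:ℝ)..1, (1 - t)^(ν/2) * eval t (Qp l 0) := by
  intro i
  induction i with
  | zero => intro _; simp
  | succ i ih =>
    intro hi
    rw [Sstep ν hν l i (by omega), ih (by omega), Finset.prod_range_succ]
    ring

lemma prodEq (ν : ℝ) (l : ℕ) :
    (∏ j ∈ Finset.range l, (ν/2 + 1 - ((l-j:ℕ):ℝ)))
      = ∏ j ∈ Finset.range l, (ν/2 - (j:ℝ)) := by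
  rw [← Finset.prod_range_reflect (fun j => ν/2 - (j:ℝ)) l]
  apply Finset.prod_congr rfl
  intro j hj
  rw [Finset.mem_range] at hj
  have h1 : (l - j : ℕ) = (l - 1 - j) + 1 := by omega
  rw [h1]
  push_cast
  ring

lemma gammaProd (x : ℝ) (hx : 0 < x) : ∀ n : ℕ,
    Real.Gamma (x + n) = (∏ j ∈ Finset.range n, (x + j)) * Real.Gamma x := by
  intro n
  induction n with
  | zero => simp
  | succ n ih =>
    have : x + (n+1:ℕ) = (x + n) + 1 := by push_cast; ring
    rw [this, Real.Gamma_add_one (by positivity), ih, Finset.prod_range_succ]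
    ring

/-- For `ν ∈ (−1,0)` and `ℓ ∈ ℕ`,
`∫_{−1}^{1} (1−t)^{ν/2} · ((d/dt)^ℓ (1−t²)^ℓ)(t) dt
  = (−1)^ℓ · (−ν/2)_ℓ · ∫_{−1}^{1} (1−t)^{ν/2}·(1+t)^ℓ dt`,
where `(x)_ℓ = Γ(x+ℓ)/Γ(x)` is the Pochhammer symbol. -/
theorem stmt_9 (ν : ℝ) (hν : ν ∈ Set.Ioo (-1 : ℝ) 0) (ℓ : ℕ) :
    ∫ t in Set.Ioo (-1 : ℝ) 1,
        (1 - t) ^ (ν / 2) * iteratedDeriv ℓ (fun s : ℝ => (1 - s ^ 2) ^ ℓ) t =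
      (-1 : ℝ) ^ ℓ * (Real.Gamma (-ν / 2 + ℓ) / Real.Gamma (-ν / 2)) *
        ∫ t in Set.Ioo (-1 : ℝ) 1, (1 - t) ^ (ν / 2) * (1 + t) ^ ℓ := by
  have hx : (0:ℝ) < -ν/2 := by cases hν; linarith
  -- rewrite the iterated derivative as polynomial eval
  have hfun : (fun s : ℝ => (1 - s ^ 2) ^ ℓ) = fun s : ℝ => eval s ((1-X)^ℓ * (1+X)^ℓ) := by
    funext s
    simp only [eval_mul, eval_pow, eval_sub, eval_add, eval_one, eval_X]
    rw [← mul_pow]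
    congr 1
    ring
  have hQl : derivative^[ℓ] ((1-X)^ℓ * (1+X)^ℓ) = Qp ℓ ℓ := by
    have := Qstruct ℓ ℓ le_rfl
    simpa using this.symm
  have hiter : iteratedDeriv ℓ (fun s : ℝ => (1 - s ^ 2) ^ ℓ) = fun t => eval t (Qp ℓ ℓ) := by
    rw [hfun, polyIter, hQl]
  -- convert Ioo integrals to interval integrals
  have hIoo : ∀ f : ℝ → ℝ, ∫ t in Set.Ioo (-1:ℝ) 1, f t = ∫ t in (-1:ℝ)..1, f t := by
    intro f
    rw [intervalIntegral.integral_of_le (by norm_num), MeasureTheory.integral_Ioc_eq_integral_Ioo]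
  rw [hiter]
  rw [hIoo (fun t => (1 - t) ^ (ν / 2) * eval t (Qp ℓ ℓ)),
      hIoo (fun t => (1 - t) ^ (ν / 2) * (1 + t) ^ ℓ)]
  have hQ0 : (fun t : ℝ => (1 - t) ^ (ν / 2) * (1 + t) ^ ℓ)
      = fun t => (1 - t) ^ (ν / 2) * eval t (Qp ℓ 0) := by
    funext t; simp [Qp]
  rw [hQ0, Scum ν hν ℓ ℓ le_rfl, prodEq]
  congr 1
  -- coefficient identity
  rw [gammaProd (-ν/2) hx ℓ, mul_div_assoc, div_self (Real.Gamma_pos_of_pos hx).ne', mul_one]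
  have : ∀ j ∈ Finset.range ℓ, -ν/2 + (j:ℝ) = -(ν/2 - (j:ℝ)) := by intro j _; ring
  rw [Finset.prod_congr rfl this]
  have hneg : ∏ x ∈ Finset.range ℓ, -(ν / 2 - (x:ℝ))
      = (-1:ℝ)^ℓ * ∏ x ∈ Finset.range ℓ, (ν / 2 - (x:ℝ)) := by
    rw [show ((-1:ℝ))^ℓ = ∏ _x ∈ Finset.range ℓ, (-1:ℝ) by simp, ← Finset.prod_mul_distrib]
    simp
  rw [hneg, ← mul_assoc, ← mul_pow]
  norm_num
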